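/- arXiv:2207.12921 — 7 statements merged into one kernel-verified Lean document; each statement's English description precedes it below -/
import Mathlib

section
/- In UT₃ with the almost-canonical ℤ₂-grading (where the even component is spanned by e₁₁, e₂₂, e₃₃, e₁₃ and the odd component by e₁₂, e₂₃), for any three odd elements z₁, z₂, z₃ one has [[z₁,z₂],z₃] = 0. -/
open Matrix

theorem ut3_almost_canonical_odd_cubed
    {F : Type*} [Field F]
    (lie : Matrix (Fin 3) (Fin 3) F → Matrix (Fin 3) (Fin 3) F → Matrix (Fin 3) (Fin 3) F)
    (hlie : ∀ x y, lie x y = x * y - y * x)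
    (z₁ z₂ z₃ : Matrix (Fin 3) (Fin 3) F)
    (h₁ : z₁ ∈ Submodule.span F ({Matrix.single 0 1 (1 : F), Matrix.single 1 2 (1 : F)} :
      Set (Matrix (Fin 3) (Fin 3) F)))
    (h₂ : z₂ ∈ Submodule.span F ({Matrix.single 0 1 (1 : F), Matrix.single 1 2 (1 : F)} :
      Set (Matrix (Fin 3) (Fin 3) F)))
    (h₃ : z₃ ∈ Submodule.span F ({Matrix.single 0 1 (1 : F), Matrix.single 1 2 (1 : F)} :
      Set (Matrix (Fin 3) (Fin 3) F))) :
    lie (lie z₁ z₂) z₃ = 0 := by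
  rw [Submodule.mem_span_pair] at h₁ h₂ h₃
  obtain ⟨a₁, b₁, rfl⟩ := h₁
  obtain ⟨a₂, b₂, rfl⟩ := h₂
  obtain ⟨a₃, b₃, rfl⟩ := h₃
  rw [hlie, hlie]
  ext i j
  fin_cases i <;> fin_cases j <;>
    simp [Matrix.mul_apply, Fin.sum_univ_three, Matrix.single]
end

section
/- In UT₃ with the almost-canonical ℤ₂-grading, for any even elements y₁, y₂ and odd element z, [[y₁,y₂],z] = 0. -/
open Matrix

lemma even_entries {F : Type*} [Field F] {y : Matrix (Fin 3) (Fin 3) F}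
    (h : y ∈ Submodule.span F ({Matrix.single 0 0 (1 : F), Matrix.single 1 1 (1 : F),
      Matrix.single 2 2 (1 : F), Matrix.single 0 2 (1 : F)} : Set (Matrix (Fin 3) (Fin 3) F))) :
    y 0 1 = 0 ∧ y 1 0 = 0 ∧ y 1 2 = 0 ∧ y 2 0 = 0 ∧ y 2 1 = 0 := by
  induction h using Submodule.span_induction with
  | mem x hx =>
    rcases hx with h | h | h | h <;> subst h <;>
      refine ⟨?_, ?_, ?_, ?_, ?_⟩ <;> simp [Matrix.single]
  | zero => simp
  | add x y _ _ hx hy =>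
    obtain ⟨a1, a2, a3, a4, a5⟩ := hx
    obtain ⟨b1, b2, b3, b4, b5⟩ := hy
    simp [Matrix.add_apply, a1, a2, a3, a4, a5, b1, b2, b3, b4, b5]
  | smul c x _ hx =>
    obtain ⟨a1, a2, a3, a4, a5⟩ := hx
    simp [Matrix.smul_apply, a1, a2, a3, a4, a5]

lemma odd_entries {F : Type*} [Field F] {z : Matrix (Fin 3) (Fin 3) F}
    (h : z ∈ Submodule.span F ({Matrix.single 0 1 (1 : F), Matrix.single 1 2 (1 : F)} :
      Set (Matrix (Fin 3) (Fin 3) F))) :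
    z 0 0 = 0 ∧ z 0 2 = 0 ∧ z 1 0 = 0 ∧ z 1 1 = 0 ∧ z 2 0 = 0 ∧ z 2 1 = 0 ∧ z 2 2 = 0 := by
  induction h using Submodule.span_induction with
  | mem x hx =>
    rcases hx with h | h <;> subst h <;>
      refine ⟨?_, ?_, ?_, ?_, ?_, ?_, ?_⟩ <;> simp [Matrix.single]
  | zero => simp
  | add x y _ _ hx hy =>
    obtain ⟨a1, a2, a3, a4, a5, a6, a7⟩ := hx
    obtain ⟨b1, b2, b3, b4, b5, b6, b7⟩ := hy
    simp [Matrix.add_apply, a1, a2, a3, a4, a5, a6, a7, b1, b2, b3, b4, b5, b6, b7]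
  | smul c x _ hx =>
    obtain ⟨a1, a2, a3, a4, a5, a6, a7⟩ := hx
    simp [Matrix.smul_apply, a1, a2, a3, a4, a5, a6, a7]

theorem ut3_almost_canonical_even_even_odd
    {F : Type*} [Field F]
    (lie : Matrix (Fin 3) (Fin 3) F → Matrix (Fin 3) (Fin 3) F → Matrix (Fin 3) (Fin 3) F)
    (hlie : ∀ x y, lie x y = x * y - y * x)
    (y₁ y₂ z : Matrix (Fin 3) (Fin 3) F)
    (h₁ : y₁ ∈ Submodule.span F ({Matrix.single 0 0 (1 : F), Matrix.single 1 1 (1 : F),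
      Matrix.single 2 2 (1 : F), Matrix.single 0 2 (1 : F)} : Set (Matrix (Fin 3) (Fin 3) F)))
    (h₂ : y₂ ∈ Submodule.span F ({Matrix.single 0 0 (1 : F), Matrix.single 1 1 (1 : F),
      Matrix.single 2 2 (1 : F), Matrix.single 0 2 (1 : F)} : Set (Matrix (Fin 3) (Fin 3) F)))
    (hz : z ∈ Submodule.span F ({Matrix.single 0 1 (1 : F), Matrix.single 1 2 (1 : F)} :
      Set (Matrix (Fin 3) (Fin 3) F))) :
    lie (lie y₁ y₂) z = 0 := by
  obtain ⟨a1, a2, a3, a4, a5⟩ := even_entries h₁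
  obtain ⟨b1, b2, b3, b4, b5⟩ := even_entries h₂
  obtain ⟨c1, c2, c3, c4, c5, c6, c7⟩ := odd_entries hz
  rw [hlie, hlie]
  ext i j
  fin_cases i <;> fin_cases j <;>
    simp [Matrix.mul_apply, Matrix.sub_apply, Fin.sum_univ_three,
      a1, a2, a3, a4, a5, b1, b2, b3, b4, b5, c1, c2, c3, c4, c5, c6, c7] <;> ring
end

section
/- In UT₃ graded by (g,1) with g nontrivial (the 'remaining' grading: deg e₁₂ = deg e₁₃ = g, all other matrix units trivial), for any element a of degree g and any elements y₂, y₃, y₄, y₅ of trivial degree, the left-normed bracket [a, [y₂,y₃], [y₄,y₅]] = 0. -/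
open Matrix

lemma mem_span_quad {F : Type*} [Field F] {M : Type*} [AddCommGroup M] [Module F M]
    {A B C D x : M} (h : x ∈ Submodule.span F ({A, B, C, D} : Set M)) :
    ∃ c1 c2 c3 c4 : F, x = c1 • A + c2 • B + c3 • C + c4 • D := by
  rw [Submodule.mem_span_insert] at h
  obtain ⟨c1, z, hz, rfl⟩ := h
  rw [Submodule.mem_span_insert] at hz
  obtain ⟨c2, z2, hz2, rfl⟩ := hz
  rw [Submodule.mem_span_insert] at hz2
  obtain ⟨c3, z3, hz3, rfl⟩ := hz2
  rw [Submodule.mem_span_singleton] at hz3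
  obtain ⟨c4, rfl⟩ := hz3
  exact ⟨c1, c2, c3, c4, by abel⟩

lemma comm_trivial {F : Type*} [Field F] (x1 x2 x3 x4 y1 y2 y3 y4 : F) :
    (x1 • Matrix.single (0:Fin 3) (0:Fin 3) (1 : F) + x2 • Matrix.single (1:Fin 3) (1:Fin 3) (1 : F) +
      x3 • Matrix.single (2:Fin 3) (2:Fin 3) (1 : F) + x4 • Matrix.single (1:Fin 3) (2:Fin 3) (1 : F)) *
    (y1 • Matrix.single (0:Fin 3) (0:Fin 3) (1 : F) + y2 • Matrix.single (1:Fin 3) (1:Fin 3) (1 : F) +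
      y3 • Matrix.single (2:Fin 3) (2:Fin 3) (1 : F) + y4 • Matrix.single (1:Fin 3) (2:Fin 3) (1 : F)) -
    (y1 • Matrix.single (0:Fin 3) (0:Fin 3) (1 : F) + y2 • Matrix.single (1:Fin 3) (1:Fin 3) (1 : F) +
      y3 • Matrix.single (2:Fin 3) (2:Fin 3) (1 : F) + y4 • Matrix.single (1:Fin 3) (2:Fin 3) (1 : F)) *
    (x1 • Matrix.single (0:Fin 3) (0:Fin 3) (1 : F) + x2 • Matrix.single (1:Fin 3) (1:Fin 3) (1 : F) +
      x3 • Matrix.single (2:Fin 3) (2:Fin 3) (1 : F) + x4 • Matrix.single (1:Fin 3) (2:Fin 3) (1 : F)) =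
    (x2 * y4 + x4 * y3 - y2 * x4 - y4 * x3) • Matrix.single (1:Fin 3) (2:Fin 3) (1 : F) := by
  ext i j
  fin_cases i <;> fin_cases j <;>
    simp [Matrix.mul_apply, Fin.sum_univ_three, Matrix.single] <;> ring

lemma comm_a {F : Type*} [Field F] (p q c : F) :
    (p • Matrix.single (0:Fin 3) (1:Fin 3) (1 : F) + q • Matrix.single (0:Fin 3) (2:Fin 3) (1 : F)) *
      (c • Matrix.single (1:Fin 3) (2:Fin 3) (1 : F)) -
    (c • Matrix.single (1:Fin 3) (2:Fin 3) (1 : F)) *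
      (p • Matrix.single (0:Fin 3) (1:Fin 3) (1 : F) + q • Matrix.single (0:Fin 3) (2:Fin 3) (1 : F)) =
    (p * c) • Matrix.single (0:Fin 3) (2:Fin 3) (1 : F) := by
  ext i j
  fin_cases i <;> fin_cases j <;>
    simp [Matrix.mul_apply, Fin.sum_univ_three, Matrix.single] <;> ring

lemma comm_final {F : Type*} [Field F] (s c : F) :
    (s • Matrix.single (0:Fin 3) (2:Fin 3) (1 : F)) * (c • Matrix.single (1:Fin 3) (2:Fin 3) (1 : F)) -
    (c • Matrix.single (1:Fin 3) (2:Fin 3) (1 : F)) * (s • Matrix.single (0:Fin 3) (2:Fin 3) (1 : F)) =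
    (0 : Matrix (Fin 3) (Fin 3) F) := by
  ext i j
  fin_cases i <;> fin_cases j <;>
    simp [Matrix.mul_apply, Fin.sum_univ_three, Matrix.single]

theorem ut3_remaining_grading_identity
    {F : Type*} [Field F]
    (lie : Matrix (Fin 3) (Fin 3) F → Matrix (Fin 3) (Fin 3) F → Matrix (Fin 3) (Fin 3) F)
    (hlie : ∀ x y, lie x y = x * y - y * x)
    (a y₂ y₃ y₄ y₅ : Matrix (Fin 3) (Fin 3) F)
    (ha : a ∈ Submodule.span F ({Matrix.single 0 1 (1 : F), Matrix.single 0 2 (1 : F)} :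
      Set (Matrix (Fin 3) (Fin 3) F)))
    (hy : ∀ y ∈ ({y₂, y₃, y₄, y₅} : Set (Matrix (Fin 3) (Fin 3) F)),
      y ∈ Submodule.span F ({Matrix.single 0 0 (1 : F), Matrix.single 1 1 (1 : F),
        Matrix.single 2 2 (1 : F), Matrix.single 1 2 (1 : F)} : Set (Matrix (Fin 3) (Fin 3) F))) :
    lie (lie a (lie y₂ y₃)) (lie y₄ y₅) = 0 := by
  obtain ⟨p, q, ha⟩ := Submodule.mem_span_pair.mp ha
  obtain ⟨a1, a2, a3, a4, h2⟩ := mem_span_quad (hy y₂ (by simp))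
  obtain ⟨b1, b2, b3, b4, h3⟩ := mem_span_quad (hy y₃ (by simp))
  obtain ⟨c1, c2, c3, c4, h4⟩ := mem_span_quad (hy y₄ (by simp))
  obtain ⟨d1, d2, d3, d4, h5⟩ := mem_span_quad (hy y₅ (by simp))
  simp only [hlie]
  rw [h2, h3, h4, h5, ← ha, comm_trivial, comm_trivial, comm_a, comm_final]
end

section
/- In UT₃ over a field of characteristic zero, with the Canonical T2 grading components A₁ = Span{e₁₂ - e₂₃} and A_{1+t} = Span{e₁₂ + e₂₃} and A₀ = Span{e₁₁ - e₃₃}, for all a ∈ A₁, b ∈ A₀, c ∈ A_{1+t}: 2·[[a,b],c] = [[a,c],b]. -/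
open Matrix

private lemma ut3_base {F : Type*} [Field F] [CharZero F]
    (X Y Z : Matrix (Fin 3) (Fin 3) F)
    (hX : X = Matrix.single 0 1 (1:F) - Matrix.single 1 2 (1:F))
    (hY : Y = Matrix.single 0 0 (1:F) - Matrix.single 2 2 (1:F))
    (hZ : Z = Matrix.single 0 1 (1:F) + Matrix.single 1 2 (1:F)) :
    2 • ((X*Y - Y*X)*Z - Z*(X*Y - Y*X)) = (X*Z - Z*X)*Y - Y*(X*Z - Z*X) := by
  subst hX hY hZ
  ext i j
  fin_cases i <;> fin_cases j <;>
    simp [Matrix.mul_apply, Matrix.single, Fin.sum_univ_three] <;> ring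

theorem ut3_canonical_T2_nonmonomial_identity
    {F : Type*} [Field F] [CharZero F]
    (lie : Matrix (Fin 3) (Fin 3) F → Matrix (Fin 3) (Fin 3) F → Matrix (Fin 3) (Fin 3) F)
    (hlie : ∀ x y, lie x y = x * y - y * x)
    (a b c : Matrix (Fin 3) (Fin 3) F)
    (ha : a ∈ Submodule.span F
      ({Matrix.single 0 1 (1 : F) - Matrix.single 1 2 (1 : F)} : Set (Matrix (Fin 3) (Fin 3) F)))
    (hb : b ∈ Submodule.span F
      ({Matrix.single 0 0 (1 : F) - Matrix.single 2 2 (1 : F)} : Set (Matrix (Fin 3) (Fin 3) F)))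
    (hc : c ∈ Submodule.span F
      ({Matrix.single 0 1 (1 : F) + Matrix.single 1 2 (1 : F)} : Set (Matrix (Fin 3) (Fin 3) F))) :
    2 • lie (lie a b) c = lie (lie a c) b := by
  rw [Submodule.mem_span_singleton] at ha hb hc
  obtain ⟨α, rfl⟩ := ha
  obtain ⟨β, rfl⟩ := hb
  obtain ⟨γ, rfl⟩ := hc
  have hsc : ∀ (r s : F) (x y : Matrix (Fin 3) (Fin 3) F),
      lie (r • x) (s • y) = (r * s) • lie x y := by
    intro r s x y
    simp only [hlie, smul_mul_assoc, mul_smul_comm, smul_smul, smul_sub, mul_comm]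
  rw [hsc, hsc, hsc, hsc]
  rw [show α * β * γ = α * γ * β by ring, smul_comm]
  congr 1
  simp only [hlie]
  exact ut3_base _ _ _ rfl rfl rfl
end

section
/- In UT₃ with the Trivial T2 ℤ₂-grading (A₀ = Span{e₁₁-e₃₃, e₁₂-e₂₃}, A_t = Span{e₁₁+e₃₃, e₂₂, e₁₂+e₂₃, e₁₃}), the alternating sum ∑_{σ∈S₃} sgn(σ)·[y, z_{σ(1)}, z_{σ(2)}, z_{σ(3)}] vanishes for every y ∈ A₀ and z₁, z₂, z₃ ∈ A_t, with left-normed brackets. -/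
open Matrix

lemma ut3_zfacts {F : Type*} [Field F] (m : Matrix (Fin 3) (Fin 3) F)
    (hm : m ∈ Submodule.span F ({Matrix.single 0 0 (1 : F) + Matrix.single 2 2 (1 : F),
      Matrix.single 1 1 (1 : F), Matrix.single 0 1 (1 : F) + Matrix.single 1 2 (1 : F),
      Matrix.single 0 2 (1 : F)} : Set (Matrix (Fin 3) (Fin 3) F))) :
    m 1 0 = 0 ∧ m 2 0 = 0 ∧ m 2 1 = 0 ∧ m 2 2 = m 0 0 ∧ m 1 2 = m 0 1 := by
  induction hm using Submodule.span_induction with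
  | mem x hx =>
    rcases hx with h | h | h | h <;> subst h <;>
      refine ⟨?_, ?_, ?_, ?_, ?_⟩ <;>
      simp [Matrix.single, Matrix.add_apply]
  | zero => simp
  | add x y _ _ hx hy =>
    obtain ⟨a1,a2,a3,a4,a5⟩ := hx; obtain ⟨b1,b2,b3,b4,b5⟩ := hy
    simp [Matrix.add_apply, a1,a2,a3,a4,a5,b1,b2,b3,b4,b5]
  | smul c x _ hx =>
    obtain ⟨a1,a2,a3,a4,a5⟩ := hx
    simp [Matrix.smul_apply, a1,a2,a3,a4,a5]

lemma ut3_yfacts {F : Type*} [Field F] (m : Matrix (Fin 3) (Fin 3) F)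
    (hm : m ∈ Submodule.span F ({Matrix.single 0 0 (1 : F) - Matrix.single 2 2 (1 : F),
      Matrix.single 0 1 (1 : F) - Matrix.single 1 2 (1 : F)} : Set (Matrix (Fin 3) (Fin 3) F))) :
    m 0 2 = 0 ∧ m 1 0 = 0 ∧ m 1 1 = 0 ∧ m 2 0 = 0 ∧ m 2 1 = 0 ∧
      m 2 2 = -(m 0 0) ∧ m 1 2 = -(m 0 1) := by
  induction hm using Submodule.span_induction with
  | mem x hx =>
    rcases hx with h | h <;> subst h <;>
      refine ⟨?_, ?_, ?_, ?_, ?_, ?_, ?_⟩ <;>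
      simp [Matrix.single, Matrix.sub_apply]
  | zero => simp
  | add x y _ _ hx hy =>
    obtain ⟨a1,a2,a3,a4,a5,a6,a7⟩ := hx; obtain ⟨b1,b2,b3,b4,b5,b6,b7⟩ := hy
    refine ⟨?_,?_,?_,?_,?_,?_,?_⟩ <;>
      simp [Matrix.add_apply, a1,a2,a3,a4,a5,a6,a7,b1,b2,b3,b4,b5,b6,b7] <;> ring
  | smul c x _ hx =>
    obtain ⟨a1,a2,a3,a4,a5,a6,a7⟩ := hx
    simp [Matrix.smul_apply, a1,a2,a3,a4,a5,a6,a7]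

set_option maxHeartbeats 1000000 in
theorem ut3_trivial_T2_alternating_identity
    {F : Type*} [Field F] [CharZero F]
    (lie : Matrix (Fin 3) (Fin 3) F → Matrix (Fin 3) (Fin 3) F → Matrix (Fin 3) (Fin 3) F)
    (hlie : ∀ x y, lie x y = x * y - y * x)
    (y : Matrix (Fin 3) (Fin 3) F)
    (hy : y ∈ Submodule.span F ({Matrix.single 0 0 (1 : F) - Matrix.single 2 2 (1 : F),
      Matrix.single 0 1 (1 : F) - Matrix.single 1 2 (1 : F)} : Set (Matrix (Fin 3) (Fin 3) F)))
    (z : Fin 3 → Matrix (Fin 3) (Fin 3) F)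
    (hz : ∀ i, z i ∈ Submodule.span F ({Matrix.single 0 0 (1 : F) + Matrix.single 2 2 (1 : F),
      Matrix.single 1 1 (1 : F), Matrix.single 0 1 (1 : F) + Matrix.single 1 2 (1 : F),
      Matrix.single 0 2 (1 : F)} : Set (Matrix (Fin 3) (Fin 3) F))) :
    ∑ σ : Equiv.Perm (Fin 3),
      (Equiv.Perm.sign σ : ℤ) • lie (lie (lie y (z (σ 0))) (z (σ 1))) (z (σ 2)) = 0 := by
  obtain ⟨y1, y2, y3, y4, y5, y6, y7⟩ := ut3_yfacts y hy
  have hz' : ∀ i : Fin 3, z i = !![z i 0 0, z i 0 1, z i 0 2;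
      0, z i 1 1, z i 0 1; 0, 0, z i 0 0] := by
    intro i
    obtain ⟨a1, a2, a3, a4, a5⟩ := ut3_zfacts (z i) (hz i)
    ext r s
    fin_cases r <;> fin_cases s <;> simp [a1, a2, a3, a4, a5, Matrix.vecHead, Matrix.vecTail]
  have hy' : y = !![y 0 0, y 0 1, 0; 0, 0, -(y 0 1); 0, 0, -(y 0 0)] := by
    ext r s
    fin_cases r <;> fin_cases s <;> simp [y1, y2, y3, y4, y5, y6, y7, Matrix.vecHead, Matrix.vecTail]
  have key : ∀ i j k : Fin 3, lie (lie (lie y (z i)) (z j)) (z k) =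
      !![0, (y 0 0 * z i 0 1 + y 0 1 * (z i 1 1 - z i 0 0)) * (z j 1 1 - z j 0 0) * (z k 1 1 - z k 0 0),
            2 * (y 0 0 * z i 0 1 + y 0 1 * (z i 1 1 - z i 0 0)) * (z j 1 1 - z j 0 0) * z k 0 1;
         0, 0, (y 0 0 * z i 0 1 + y 0 1 * (z i 1 1 - z i 0 0)) * (z j 1 1 - z j 0 0) * (z k 1 1 - z k 0 0);
         0, 0, 0] := by
    intro i j k
    rw [hlie, hlie, hlie, hy', hz' i, hz' j, hz' k]
    ext r s
    fin_cases r <;> fin_cases s <;> simp [Matrix.mul_fin_three, Matrix.vecHead, Matrix.vecTail] <;> ring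
  have huniv : (Finset.univ : Finset (Equiv.Perm (Fin 3))) =
      {1, Equiv.swap 0 1, Equiv.swap 0 2, Equiv.swap 1 2,
       Equiv.swap 0 1 * Equiv.swap 1 2, Equiv.swap 1 2 * Equiv.swap 0 1} := by decide
  rw [huniv, Finset.sum_insert (by decide), Finset.sum_insert (by decide),
    Finset.sum_insert (by decide), Finset.sum_insert (by decide),
    Finset.sum_insert (by decide), Finset.sum_singleton]
  have p1 : ∀ r : Fin 3, (1 : Equiv.Perm (Fin 3)) r = r := fun r => rfl
  have p2 : ((Equiv.swap 0 1 * Equiv.swap 1 2 : Equiv.Perm (Fin 3)) 0 = 1 ∧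
      (Equiv.swap 0 1 * Equiv.swap 1 2 : Equiv.Perm (Fin 3)) 1 = 2 ∧
      (Equiv.swap 0 1 * Equiv.swap 1 2 : Equiv.Perm (Fin 3)) 2 = 0) := by decide
  have p3 : ((Equiv.swap 1 2 * Equiv.swap 0 1 : Equiv.Perm (Fin 3)) 0 = 2 ∧
      (Equiv.swap 1 2 * Equiv.swap 0 1 : Equiv.Perm (Fin 3)) 1 = 0 ∧
      (Equiv.swap 1 2 * Equiv.swap 0 1 : Equiv.Perm (Fin 3)) 2 = 1) := by decide
  have p4 : ((Equiv.swap 0 1 : Equiv.Perm (Fin 3)) 0 = 1 ∧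
      (Equiv.swap 0 1 : Equiv.Perm (Fin 3)) 1 = 0 ∧ (Equiv.swap 0 1 : Equiv.Perm (Fin 3)) 2 = 2) := by decide
  have p5 : ((Equiv.swap 0 2 : Equiv.Perm (Fin 3)) 0 = 2 ∧
      (Equiv.swap 0 2 : Equiv.Perm (Fin 3)) 1 = 1 ∧ (Equiv.swap 0 2 : Equiv.Perm (Fin 3)) 2 = 0) := by decide
  have p6 : ((Equiv.swap 1 2 : Equiv.Perm (Fin 3)) 0 = 0 ∧
      (Equiv.swap 1 2 : Equiv.Perm (Fin 3)) 1 = 2 ∧ (Equiv.swap 1 2 : Equiv.Perm (Fin 3)) 2 = 1) := by decide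
  simp only [p1, p2.1, p2.2.1, p2.2.2, p3.1, p3.2.1, p3.2.2, p4.1, p4.2.1, p4.2.2,
    p5.1, p5.2.1, p5.2.2, p6.1, p6.2.1, p6.2.2]
  rw [key 0 1 2, key 1 0 2, key 2 1 0, key 0 2 1, key 1 2 0, key 2 0 1]
  have s1 : ((Equiv.Perm.sign (1 : Equiv.Perm (Fin 3))) : ℤ) = 1 := by decide
  have s2 : ((Equiv.Perm.sign (Equiv.swap (0:Fin 3) 1)) : ℤ) = -1 := by decide
  have s3 : ((Equiv.Perm.sign (Equiv.swap (0:Fin 3) 2)) : ℤ) = -1 := by decide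
  have s4 : ((Equiv.Perm.sign (Equiv.swap (1:Fin 3) 2)) : ℤ) = -1 := by decide
  have s5 : ((Equiv.Perm.sign (Equiv.swap 0 1 * Equiv.swap 1 2 : Equiv.Perm (Fin 3))) : ℤ) = 1 := by decide
  have s6 : ((Equiv.Perm.sign (Equiv.swap 1 2 * Equiv.swap 0 1 : Equiv.Perm (Fin 3))) : ℤ) = 1 := by decide
  rw [s1, s2, s3, s4, s5, s6]
  simp only [one_smul, neg_smul]
  ext r s
  fin_cases r <;> fin_cases s <;>
    simp [Matrix.add_apply, Matrix.neg_apply, Matrix.vecHead, Matrix.vecTail] <;> ring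
end

section
/- In UT₃ with the Trivial T2 ℤ₂-grading, for all y₁, y₂ ∈ A₀ and z₁, z₂ ∈ A_t: [[y₁,y₂],[y₃,y₄]] = 0 for any y₃,y₄ ∈ A₀, [[z₁,z₂],[z₃,z₄]] = 0 for any z₃,z₄ ∈ A_t, and [[y₁,z₁],[y₂,z₂]] = 0. -/
open Matrix

section Aux
variable {F : Type*} [Field F]

private def U : Matrix (Fin 3) (Fin 3) F := Matrix.single 0 0 1 - Matrix.single 2 2 1
private def V : Matrix (Fin 3) (Fin 3) F := Matrix.single 0 1 1 - Matrix.single 1 2 1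
private def W1 : Matrix (Fin 3) (Fin 3) F := Matrix.single 0 0 1 + Matrix.single 2 2 1
private def W2 : Matrix (Fin 3) (Fin 3) F := Matrix.single 1 1 1
private def W3 : Matrix (Fin 3) (Fin 3) F := Matrix.single 0 1 1 + Matrix.single 1 2 1
private def W4 : Matrix (Fin 3) (Fin 3) F := Matrix.single 0 2 1

private lemma mem4 {w1 w2 w3 w4 x : Matrix (Fin 3) (Fin 3) F}
    (hx : x ∈ Submodule.span F ({w1, w2, w3, w4} : Set (Matrix (Fin 3) (Fin 3) F))) :
    ∃ a b c d : F, x = a • w1 + b • w2 + c • w3 + d • w4 := by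
  rw [Submodule.mem_span_insert] at hx
  obtain ⟨a, z, hz, rfl⟩ := hx
  rw [Submodule.mem_span_insert] at hz
  obtain ⟨b, z', hz', rfl⟩ := hz
  rw [Submodule.mem_span_pair] at hz'
  obtain ⟨c, d, rfl⟩ := hz'
  exact ⟨a, b, c, d, by abel⟩

private lemma bracketA0 (a b c d : F) :
    (a • U + b • V) * (c • U + d • V) - (c • U + d • V) * (a • U + b • V)
      = (a * d - b * c) • (V : Matrix (Fin 3) (Fin 3) F) := by
  simp only [U, V, add_mul, mul_add, sub_mul, mul_sub, smul_mul_assoc, mul_smul_comm]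
  simp only [Matrix.single_mul_single_same, Matrix.single_mul_single_of_ne,
    (by decide : (1:Fin 3) ≠ 0), (by decide : (2:Fin 3) ≠ 0), (by decide : (0:Fin 3) ≠ 2),
    (by decide : (1:Fin 3) ≠ 2), (by decide : (0:Fin 3) ≠ 1), (by decide : (2:Fin 3) ≠ 1),
    ne_eq, not_false_eq_true, mul_one, smul_zero]
  module

private lemma bracketAt (a1 a2 a3 a4 b1 b2 b3 b4 : F) :
    (a1 • W1 + a2 • W2 + a3 • W3 + a4 • W4) * (b1 • W1 + b2 • W2 + b3 • W3 + b4 • W4)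
      - (b1 • W1 + b2 • W2 + b3 • W3 + b4 • W4) * (a1 • W1 + a2 • W2 + a3 • W3 + a4 • W4)
      = (a1 * b3 - a3 * b1 - a2 * b3 + a3 * b2) • (V : Matrix (Fin 3) (Fin 3) F) := by
  simp only [V, W1, W2, W3, W4, add_mul, mul_add, smul_mul_assoc, mul_smul_comm]
  simp only [Matrix.single_mul_single_same, Matrix.single_mul_single_of_ne,
    (by decide : (1:Fin 3) ≠ 0), (by decide : (2:Fin 3) ≠ 0), (by decide : (0:Fin 3) ≠ 2),
    (by decide : (1:Fin 3) ≠ 2), (by decide : (0:Fin 3) ≠ 1), (by decide : (2:Fin 3) ≠ 1),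
    ne_eq, not_false_eq_true, mul_one, smul_zero]
  module

private lemma bracketMix (a b p q r s : F) :
    (a • U + b • V) * (p • W1 + q • W2 + r • W3 + s • W4)
      - (p • W1 + q • W2 + r • W3 + s • W4) * (a • U + b • V)
      = (a * r - b * p + b * q) • W3 + (2 * (a * s + b * r)) • (W4 : Matrix (Fin 3) (Fin 3) F) := by
  simp only [U, V, W1, W2, W3, W4, add_mul, mul_add, sub_mul, mul_sub,
    smul_mul_assoc, mul_smul_comm]
  simp only [Matrix.single_mul_single_same, Matrix.single_mul_single_of_ne,
    (by decide : (1:Fin 3) ≠ 0), (by decide : (2:Fin 3) ≠ 0), (by decide : (0:Fin 3) ≠ 2),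
    (by decide : (1:Fin 3) ≠ 2), (by decide : (0:Fin 3) ≠ 1), (by decide : (2:Fin 3) ≠ 1),
    ne_eq, not_false_eq_true, mul_one, smul_zero]
  module

private lemma comm2 {x y : Matrix (Fin 3) (Fin 3) F} (h : x * y = y * x) (p q p' q' : F) :
    (p • x + q • y) * (p' • x + q' • y) - (p' • x + q' • y) * (p • x + q • y) = 0 := by
  simp only [add_mul, mul_add, smul_mul_assoc, mul_smul_comm, h]
  module

private lemma W3W4comm : (W3 : Matrix (Fin 3) (Fin 3) F) * W4 = W4 * W3 := by
  simp [W3, W4, add_mul, mul_add, Matrix.single_mul_single_of_ne]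

end Aux

theorem ut3_trivial_T2_product_identities
    {F : Type*} [Field F]
    (lie : Matrix (Fin 3) (Fin 3) F → Matrix (Fin 3) (Fin 3) F → Matrix (Fin 3) (Fin 3) F)
    (hlie : ∀ x y, lie x y = x * y - y * x)
    (A₀ : Submodule F (Matrix (Fin 3) (Fin 3) F))
    (At : Submodule F (Matrix (Fin 3) (Fin 3) F))
    (hA₀ : A₀ = Submodule.span F ({Matrix.single 0 0 (1 : F) - Matrix.single 2 2 (1 : F),
      Matrix.single 0 1 (1 : F) - Matrix.single 1 2 (1 : F)} : Set (Matrix (Fin 3) (Fin 3) F)))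
    (hAt : At = Submodule.span F ({Matrix.single 0 0 (1 : F) + Matrix.single 2 2 (1 : F),
      Matrix.single 1 1 (1 : F), Matrix.single 0 1 (1 : F) + Matrix.single 1 2 (1 : F),
      Matrix.single 0 2 (1 : F)} : Set (Matrix (Fin 3) (Fin 3) F))) :
    (∀ y₁ ∈ A₀, ∀ y₂ ∈ A₀, ∀ y₃ ∈ A₀, ∀ y₄ ∈ A₀, lie (lie y₁ y₂) (lie y₃ y₄) = 0) ∧
    (∀ z₁ ∈ At, ∀ z₂ ∈ At, ∀ z₃ ∈ At, ∀ z₄ ∈ At, lie (lie z₁ z₂) (lie z₃ z₄) = 0) ∧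
    (∀ y₁ ∈ A₀, ∀ z₁ ∈ At, ∀ y₂ ∈ A₀, ∀ z₂ ∈ At, lie (lie y₁ z₁) (lie y₂ z₂) = 0) := by
  have hA0mem : ∀ y ∈ A₀, ∃ a b : F, y = a • U + b • V := by
    intro y hy
    rw [hA₀, Submodule.mem_span_pair] at hy
    obtain ⟨a, b, rfl⟩ := hy
    exact ⟨a, b, rfl⟩
  have hAtmem : ∀ z ∈ At, ∃ a b c d : F, z = a • W1 + b • W2 + c • W3 + d • W4 := by
    intro z hz
    rw [hAt] at hz
    exact mem4 hz
  -- brackets land in span of V (first two cases)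
  have hVV : ∀ s t : F, lie (s • (V : Matrix (Fin 3) (Fin 3) F)) (t • V) = 0 := by
    intro s t
    rw [hlie, smul_mul_smul_comm, smul_mul_smul_comm, mul_comm t s, sub_self]
  constructor
  · intro y₁ h₁ y₂ h₂ y₃ h₃ y₄ h₄
    obtain ⟨a₁, b₁, rfl⟩ := hA0mem _ h₁
    obtain ⟨a₂, b₂, rfl⟩ := hA0mem _ h₂
    obtain ⟨a₃, b₃, rfl⟩ := hA0mem _ h₃
    obtain ⟨a₄, b₄, rfl⟩ := hA0mem _ h₄
    have e12 := (hlie _ _).trans (bracketA0 a₁ b₁ a₂ b₂)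
    have e34 := (hlie _ _).trans (bracketA0 a₃ b₃ a₄ b₄)
    rw [e12, e34, hVV]
  constructor
  · intro z₁ h₁ z₂ h₂ z₃ h₃ z₄ h₄
    obtain ⟨a₁, b₁, c₁, d₁, rfl⟩ := hAtmem _ h₁
    obtain ⟨a₂, b₂, c₂, d₂, rfl⟩ := hAtmem _ h₂
    obtain ⟨a₃, b₃, c₃, d₃, rfl⟩ := hAtmem _ h₃
    obtain ⟨a₄, b₄, c₄, d₄, rfl⟩ := hAtmem _ h₄
    have e12 := (hlie _ _).trans (bracketAt a₁ b₁ c₁ d₁ a₂ b₂ c₂ d₂)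
    have e34 := (hlie _ _).trans (bracketAt a₃ b₃ c₃ d₃ a₄ b₄ c₄ d₄)
    rw [e12, e34, hVV]
  · intro y₁ h₁ z₁ h₁' y₂ h₂ z₂ h₂'
    obtain ⟨a₁, b₁, rfl⟩ := hA0mem _ h₁
    obtain ⟨a₂, b₂, rfl⟩ := hA0mem _ h₂
    obtain ⟨p₁, q₁, r₁, s₁, rfl⟩ := hAtmem _ h₁'
    obtain ⟨p₂, q₂, r₂, s₂, rfl⟩ := hAtmem _ h₂'
    have e1 := (hlie _ _).trans (bracketMix a₁ b₁ p₁ q₁ r₁ s₁)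
    have e2 := (hlie _ _).trans (bracketMix a₂ b₂ p₂ q₂ r₂ s₂)
    rw [e1, e2, hlie]
    exact comm2 W3W4comm _ _ _ _
end

section
/- In UT₅ graded elementarily by η = (g, g, h, h) with g, h distinct nontrivial group elements, the element [[a,b],[c,d]] vanishes for all a, c of degree g and b, d of degree h, even though the single long commutator vanishing identities alone would not force this; concretely, for a, c ∈ Span{e₁₂, e₂₃} and b, d ∈ Span{e₃₄, e₄₅}, [[a,b],[c,d]] = 0 in UT₅. -/
open Matrix

theorem ut5_gghh_grading_identity
    {F : Type*} [Field F]
    (lie : Matrix (Fin 5) (Fin 5) F → Matrix (Fin 5) (Fin 5) F → Matrix (Fin 5) (Fin 5) F)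
    (hlie : ∀ x y, lie x y = x * y - y * x)
    (a c : Matrix (Fin 5) (Fin 5) F)
    (ha : a ∈ Submodule.span F ({single 0 1 (1 : F), single 1 2 (1 : F)} :
      Set (Matrix (Fin 5) (Fin 5) F)))
    (hc : c ∈ Submodule.span F ({single 0 1 (1 : F), single 1 2 (1 : F)} :
      Set (Matrix (Fin 5) (Fin 5) F)))
    (b d : Matrix (Fin 5) (Fin 5) F)
    (hb : b ∈ Submodule.span F ({single 2 3 (1 : F), single 3 4 (1 : F)} :
      Set (Matrix (Fin 5) (Fin 5) F)))
    (hd : d ∈ Submodule.span F ({single 2 3 (1 : F), single 3 4 (1 : F)} :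
      Set (Matrix (Fin 5) (Fin 5) F))) :
    lie (lie a b) (lie c d) = 0 := by
  obtain ⟨a1, a2, rfl⟩ := Submodule.mem_span_pair.mp ha
  obtain ⟨c1, c2, rfl⟩ := Submodule.mem_span_pair.mp hc
  obtain ⟨b1, b2, rfl⟩ := Submodule.mem_span_pair.mp hb
  obtain ⟨d1, d2, rfl⟩ := Submodule.mem_span_pair.mp hd
  simp only [hlie, smul_eq_mul] at *
  simp only [sub_mul, mul_sub, add_mul, mul_add, Matrix.smul_mul, Matrix.mul_smul,
    Matrix.single_mul_single_of_ne, Matrix.single_mul_single_same,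
    (by decide : (1:Fin 5) ≠ 0), (by decide : (2:Fin 5) ≠ 0), (by decide : (2:Fin 5) ≠ 1),
    (by decide : (3:Fin 5) ≠ 0), (by decide : (3:Fin 5) ≠ 1), (by decide : (3:Fin 5) ≠ 2),
    (by decide : (4:Fin 5) ≠ 0), (by decide : (4:Fin 5) ≠ 1), (by decide : (4:Fin 5) ≠ 2),
    (by decide : (4:Fin 5) ≠ 3), (by decide : (0:Fin 5) ≠ 1), (by decide : (0:Fin 5) ≠ 2),
    (by decide : (0:Fin 5) ≠ 3), (by decide : (0:Fin 5) ≠ 4), (by decide : (1:Fin 5) ≠ 2),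
    (by decide : (1:Fin 5) ≠ 3), (by decide : (1:Fin 5) ≠ 4), (by decide : (2:Fin 5) ≠ 3),
    (by decide : (2:Fin 5) ≠ 4), (by decide : (3:Fin 5) ≠ 4),
    ne_eq, not_false_eq_true, smul_zero, zero_mul, mul_zero, sub_zero, zero_sub, add_zero,
    zero_add, smul_neg, neg_zero, mul_one, one_mul, sub_self]
  try abel
end
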